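/- Let m, n be positive integers, let f : ℝᵐ → ℝ be continuously differentiable and assume that every stationary point of f is a global minimizer of f (i.e., for all y, fderiv ℝ f y = 0 implies f y ≤ f z for all z). Let H : ℝⁿ → ℝᵐ be a surjective continuous linear map (full row rank) and let b ∈ ℝᵐ. Then the function h(x) = f(H x - b) has the same property: for every x with fderiv ℝ h x = 0, x is a global minimizer of h. In particular h is invex. -/

import Mathlib

open Real

theorem stmt_5 (m n : ℕ) (hm : 0 < m) (hn : 0 < n)
    (f : EuclideanSpace ℝ (Fin m) → ℝ) (hf : ContDiff ℝ 1 f)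
    (hmin : ∀ y, fderiv ℝ f y = 0 → ∀ z, f y ≤ f z)
    (H : EuclideanSpace ℝ (Fin n) →L[ℝ] EuclideanSpace ℝ (Fin m))
    (hH : Function.Surjective H)
    (b : EuclideanSpace ℝ (Fin m))
    (h : EuclideanSpace ℝ (Fin n) → ℝ)
    (hh : ∀ x, h x = f (H x - b)) :
    ∀ x, fderiv ℝ h x = 0 → ∀ z, h x ≤ h z := by
  intro x hx z
  have hg : ∀ x, HasFDerivAt (fun x => H x - b) H x := fun x =>
    (H.hasFDerivAt.sub_const b)
  have hfd : HasFDerivAt f (fderiv ℝ f (H x - b)) (H x - b) :=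
    (hf.differentiable one_ne_zero (H x - b)).hasFDerivAt
  have hcomp : HasFDerivAt h ((fderiv ℝ f (H x - b)).comp H) x := by
    have := hfd.comp x (hg x)
    exact this.congr_of_eventuallyEq (Filter.Eventually.of_forall fun y => (hh y))
  have hx' : (fderiv ℝ f (H x - b)).comp H = 0 := by
    rw [← hcomp.fderiv]; exact hx
  have hzero : fderiv ℝ f (H x - b) = 0 := by
    ext v
    obtain ⟨u, hu⟩ := hH v
    have := congrArg (fun L => L u) hx'
    simpa [hu] using this
  rw [hh x, hh z]
  exact hmin _ hzero _
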